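/- Let V = ℂ² and suppose q : V → V ⊗ V is a linear map such that there exist vectors u₊, u₋ forming a basis of V with q(u₊) = 0 and q(u₋) = u₋ ⊗ u₋. Define Q : V^⊗L → V^⊗(L+1) by Q = Σ_{j=1}^L (-1)^j q_j. Then for every L ≥ 1 the cohomology H^L = ker{Q : V^⊗L → V^⊗(L+1)} / im{Q : V^⊗(L-1) → V^⊗L} (with im interpreted as 0 for L = 1) is one-dimensional, spanned by the class of u₊^⊗L. -/

import Mathlib

open Matrix

noncomputable section

/-- Matrix of the operator `q_j` that applies the local supercharge (with matrix
elements `qm a b t`, i.e. `q e_t = ∑ a b, qm a b t • e_a ⊗ e_b`) on the `j`-th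
tensor factor of `V^⊗L`, `V = ℂ²`. -/
def qjMat (qm : Fin 2 → Fin 2 → Fin 2 → ℂ) (L : ℕ) (j : Fin L) :
    Matrix (Fin (L + 1) → Fin 2) (Fin L → Fin 2) ℂ := fun s s' =>
  if ∀ i : Fin L, i ≠ j → s (Fin.succAbove j.succ i) = s' i then
    qm (s j.castSucc) (s j.succ) (s' j)
  else 0

/-- The supercharge `Q = ∑_{j=1}^L (-1)^j q_j : V^⊗L → V^⊗(L+1)`. -/
def Qop (qm : Fin 2 → Fin 2 → Fin 2 → ℂ) (L : ℕ) :
    ((Fin L → Fin 2) → ℂ) →ₗ[ℂ] ((Fin (L + 1) → Fin 2) → ℂ) :=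
  (∑ j : Fin L, ((-1 : ℂ) ^ ((j : ℕ) + 1)) • qjMat qm L j).mulVecLin

/-- `u^⊗L` as a vector of `V^⊗L`. -/
def uPow (u : Fin 2 → ℂ) (L : ℕ) : (Fin L → Fin 2) → ℂ := fun s => ∏ i, u (s i)

namespace Stmt2Aux

set_option linter.unusedSectionVars false


abbrev W (L : ℕ) := (Fin L → Fin 2) → ℂ

def tens (v : Fin 2 → ℂ) {L : ℕ} : W L →ₗ[ℂ] W (L + 1) where
  toFun x := fun s => v (s 0) * x (fun i => s i.succ)
  map_add' x y := by funext s; simp [mul_add]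
  map_smul' c x := by funext s; simp [smul_eq_mul]; ring

lemma tens_apply (v : Fin 2 → ℂ) {L : ℕ} (x : W L) (s : Fin (L+1) → Fin 2) :
    tens v x s = v (s 0) * x (fun i => s i.succ) := rfl

lemma tens_cons (v : Fin 2 → ℂ) {L : ℕ} (x : W L) (t : Fin 2) (σ : Fin L → Fin 2) :
    tens v x (Fin.cons t σ) = v t * x σ := by
  rw [tens_apply]; simp [Fin.cons_succ]

lemma sum_pi_succ {n : ℕ} (f : (Fin (n+1) → Fin 2) → ℂ) :
    ∑ s : Fin (n+1) → Fin 2, f s = ∑ t : Fin 2, ∑ σ : Fin n → Fin 2, f (Fin.cons t σ) := by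
  rw [← Equiv.sum_comp (Fin.consEquiv fun _ => Fin 2) f, Fintype.sum_prod_type]
  rfl

lemma Qop_apply (qm : Fin 2 → Fin 2 → Fin 2 → ℂ) (L : ℕ) (x : W L) (s : Fin (L+1) → Fin 2) :
    Qop qm L x s = ∑ j : Fin L, (-1:ℂ)^((j:ℕ)+1) *
      ∑ s' : Fin L → Fin 2, qjMat qm L j s s' * x s' := by
  simp only [Qop, mulVecLin_apply, mulVec, dotProduct, Finset.sum_apply,
    Matrix.sum_apply, Matrix.smul_apply, smul_eq_mul, Finset.sum_mul]
  rw [Finset.sum_comm]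
  exact Finset.sum_congr rfl fun j _ => by rw [Finset.mul_sum]; exact Finset.sum_congr rfl fun s' _ => by ring

lemma Qop_zero' (qm : Fin 2 → Fin 2 → Fin 2 → ℂ) : Qop qm 0 = 0 := by
  apply LinearMap.ext
  intro x
  funext s
  rw [LinearMap.zero_apply, Qop_apply]
  simp

variable (qm : Fin 2 → Fin 2 → Fin 2 → ℂ)

lemma qjMat_zero_cons (L : ℕ) (s : Fin (L+2) → Fin 2) (t : Fin 2) (σ : Fin L → Fin 2) :
    qjMat qm (L+1) 0 s (Fin.cons t σ) =
      if σ = (fun m => s m.succ.succ) then qm (s 0) (s 1) t else 0 := by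
  have hcond : (∀ i : Fin (L+1), i ≠ 0 → s (Fin.succAbove (0:Fin (L+1)).succ i) = (Fin.cons t σ : Fin (L+1) → Fin 2) i)
      ↔ σ = (fun m => s m.succ.succ) := by
    constructor
    · intro h; funext m
      have := h m.succ (Fin.succ_ne_zero m)
      rw [Fin.succ_succAbove_succ, Fin.succAbove_zero, Fin.cons_succ] at this
      exact this.symm
    · rintro rfl i hi
      cases i using Fin.cases with
      | zero => exact absurd rfl hi
      | succ m => rw [Fin.succ_succAbove_succ, Fin.succAbove_zero, Fin.cons_succ]
  simp only [qjMat]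
  simp only [hcond]
  simp only [Fin.castSucc_zero, Fin.succ_zero_eq_one, Fin.cons_zero]

lemma qjMat_succ_cons (L : ℕ) (i : Fin L) (s : Fin (L+2) → Fin 2) (t : Fin 2) (σ : Fin L → Fin 2) :
    qjMat qm (L+1) i.succ s (Fin.cons t σ) =
      if t = s 0 then qjMat qm L i (fun k => s k.succ) σ else 0 := by
  by_cases ht : t = s 0
  · have hcond : (∀ k : Fin (L+1), k ≠ i.succ → s (Fin.succAbove i.succ.succ k) = (Fin.cons t σ : Fin (L+1) → Fin 2) k)
        ↔ (∀ m : Fin L, m ≠ i → s (Fin.succAbove i.succ m).succ = σ m) := by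
      constructor
      · intro h m hm
        have := h m.succ (by simpa [Fin.succ_inj] using hm)
        rw [Fin.succ_succAbove_succ, Fin.cons_succ] at this
        exact this
      · intro h k hk
        cases k using Fin.cases with
        | zero =>
          rw [Fin.succAbove_ne_zero_zero (Fin.succ_ne_zero i.succ), Fin.cons_zero]
          exact ht.symm
        | succ m =>
          have hm : m ≠ i := by simpa [Fin.succ_inj] using hk
          rw [Fin.succ_succAbove_succ, Fin.cons_succ]
          exact h m hm
    rw [if_pos ht]
    simp only [qjMat]
    simp only [hcond]
    simp only [Fin.cons_succ, Fin.succ_castSucc]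
  · rw [if_neg ht]
    rw [qjMat, if_neg]
    intro h
    have := h 0 (Ne.symm (Fin.succ_ne_zero i))
    rw [Fin.succAbove_ne_zero_zero (Fin.succ_ne_zero i.succ), Fin.cons_zero] at this
    exact ht this.symm


lemma Qop_tens' (L : ℕ) (v : Fin 2 → ℂ) (x : W L) (s : Fin (L+2) → Fin 2) :
    Qop qm (L+1) (tens v x) s
      = -((∑ t, qm (s 0) (s 1) t * v t) * x (fun k => s k.succ.succ))
        - v (s 0) * (Qop qm L x (fun k => s k.succ)) := by
  rw [Qop_apply, Fin.sum_univ_succ]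
  have hA : ∑ s' : Fin (L+1) → Fin 2, qjMat qm (L+1) 0 s s' * tens v x s'
      = (∑ t, qm (s 0) (s 1) t * v t) * x (fun k => s k.succ.succ) := by
    rw [sum_pi_succ, Finset.sum_mul]
    refine Finset.sum_congr rfl fun t _ => ?_
    have h1 : ∀ σ : Fin L → Fin 2,
        qjMat qm (L+1) 0 s (Fin.cons t σ) * tens v x (Fin.cons t σ)
          = if σ = (fun m => s m.succ.succ) then qm (s 0) (s 1) t * (v t * x σ) else 0 := by
      intro σ
      rw [qjMat_zero_cons, tens_cons]
      split
      · ring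
      · rw [zero_mul]
    rw [Finset.sum_congr rfl fun σ _ => h1 σ, Finset.sum_ite_eq' Finset.univ]
    rw [if_pos (Finset.mem_univ _)]
    ring
  have hB : ∀ i : Fin L,
      ∑ s' : Fin (L+1) → Fin 2, qjMat qm (L+1) i.succ s s' * tens v x s'
        = v (s 0) * ∑ σ : Fin L → Fin 2, qjMat qm L i (fun k => s k.succ) σ * x σ := by
    intro i
    rw [sum_pi_succ]
    have h1 : ∀ t : Fin 2, ∑ σ : Fin L → Fin 2,
        qjMat qm (L+1) i.succ s (Fin.cons t σ) * tens v x (Fin.cons t σ)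
          = if t = s 0 then v t * ∑ σ : Fin L → Fin 2, qjMat qm L i (fun k => s k.succ) σ * x σ else 0 := by
      intro t
      by_cases ht : t = s 0
      · rw [if_pos ht, Finset.mul_sum]
        refine Finset.sum_congr rfl fun σ _ => ?_
        rw [qjMat_succ_cons, if_pos ht, tens_cons]
        ring
      · rw [if_neg ht]
        refine Finset.sum_eq_zero fun σ _ => ?_
        rw [qjMat_succ_cons, if_neg ht, zero_mul]
    rw [Finset.sum_congr rfl fun t _ => h1 t, Finset.sum_ite_eq' Finset.univ]
    rw [if_pos (Finset.mem_univ _)]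
  rw [hA, Qop_apply qm L x]
  have hstep : ∑ i : Fin L, (-1:ℂ)^(((i.succ : Fin (L+1)) : ℕ)+1) *
      ∑ s' : Fin (L+1) → Fin 2, qjMat qm (L+1) i.succ s s' * tens v x s'
        = -(v (s 0) * ∑ j : Fin L, (-1:ℂ)^((j:ℕ)+1) *
            ∑ σ : Fin L → Fin 2, qjMat qm L j (fun k => s k.succ) σ * x σ) := by
    rw [Finset.mul_sum, ← Finset.sum_neg_distrib]
    refine Finset.sum_congr rfl fun i _ => ?_
    rw [hB i, Fin.val_succ, pow_succ]
    ring
  rw [hstep]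
  simp only [Fin.val_zero]
  ring


variable (qm : Fin 2 → Fin 2 → Fin 2 → ℂ) (up um : Fin 2 → ℂ)

def Dop (L : ℕ) : W L →ₗ[ℂ] W (L+1) := Qop qm L + tens um

lemma Qop_tens_up (hup : ∀ a b : Fin 2, ∑ t : Fin 2, qm a b t * up t = 0)
    (L : ℕ) (x : W L) : Qop qm (L+1) (tens up x) = - tens up (Qop qm L x) := by
  funext s
  rw [Qop_tens' qm L up x s, hup (s 0) (s 1)]
  simp only [zero_mul, neg_zero, zero_sub, Pi.neg_apply, tens_apply]

lemma Qop_tens_um (hum : ∀ a b : Fin 2, ∑ t : Fin 2, qm a b t * um t = um a * um b)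
    (L : ℕ) (x : W L) : Qop qm (L+1) (tens um x) = - tens um (Dop qm um L x) := by
  funext s
  rw [Qop_tens' qm L um x s, hum (s 0) (s 1)]
  simp only [Dop, LinearMap.add_apply, Pi.neg_apply, tens_apply, Pi.add_apply,
    Fin.succ_zero_eq_one]
  ring

def pr (w0 w1 : ℂ) {L : ℕ} : W (L+1) →ₗ[ℂ] W L where
  toFun x := fun σ => w0 * x (Fin.cons 0 σ) + w1 * x (Fin.cons 1 σ)
  map_add' x y := by funext σ; simp [Pi.add_apply]; ring
  map_smul' c x := by funext σ; simp [smul_eq_mul]; ring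

def dd : ℂ := up 0 * um 1 - up 1 * um 0

def pUp {L : ℕ} : W (L+1) →ₗ[ℂ] W L := pr (um 1 / dd up um) (-(um 0) / dd up um)
def pUm {L : ℕ} : W (L+1) →ₗ[ℂ] W L := pr (-(up 1) / dd up um) (up 0 / dd up um)

lemma pr_tens (w0 w1 : ℂ) (v : Fin 2 → ℂ) {L : ℕ} (x : W L) :
    pr w0 w1 (tens v x) = (w0 * v 0 + w1 * v 1) • x := by
  funext σ
  simp only [pr, LinearMap.coe_mk, AddHom.coe_mk, tens_cons, Pi.smul_apply, smul_eq_mul]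
  ring

lemma dd_ne_zero (hbasis : LinearIndependent ℂ ![up, um]) : dd up um ≠ 0 := by
  intro hdd
  rw [LinearIndependent.pair_iff] at hbasis
  rw [dd] at hdd
  have h1 := hbasis (um 0) (-(up 0)) (by
    funext i
    fin_cases i <;> simp only [Fin.mk_zero, Fin.mk_one, Pi.add_apply, Pi.smul_apply,
      smul_eq_mul, Pi.zero_apply, Pi.neg_apply]
    · ring
    · linear_combination (-1 : ℂ) * hdd)
  have h2 := hbasis (um 1) (-(up 1)) (by
    funext i
    fin_cases i <;> simp only [Fin.mk_zero, Fin.mk_one, Pi.add_apply, Pi.smul_apply,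
      smul_eq_mul, Pi.zero_apply, Pi.neg_apply]
    · linear_combination hdd
    · ring)
  have hup0 : up 0 = 0 := by have := h1.2; simpa using this
  have hup1 : up 1 = 0 := by have := h2.2; simpa using this
  have h3 := hbasis 1 0 (by
    funext i
    fin_cases i <;> simp [hup0, hup1])
  exact one_ne_zero h3.1

lemma pUp_tens_up (hd : dd up um ≠ 0) {L : ℕ} (x : W L) : pUp up um (tens up x) = x := by
  rw [pUp, pr_tens]
  have : um 1 / dd up um * up 0 + -(um 0) / dd up um * up 1 = 1 := by
    rw [dd] at hd ⊢; field_simp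
    have hD : um 1 * up 0 - up 1 * um 0 ≠ 0 := by intro h; apply hd; linear_combination h
    linear_combination mul_inv_cancel₀ hD
  rw [this, one_smul]

lemma pUp_tens_um (hd : dd up um ≠ 0) {L : ℕ} (x : W L) : pUp up um (tens um x) = 0 := by
  rw [pUp, pr_tens]
  have : um 1 / dd up um * um 0 + -(um 0) / dd up um * um 1 = 0 := by
    field_simp; ring
  rw [this, zero_smul]

lemma pUm_tens_up (hd : dd up um ≠ 0) {L : ℕ} (x : W L) : pUm up um (tens up x) = 0 := by
  rw [pUm, pr_tens]
  have : -(up 1) / dd up um * up 0 + up 0 / dd up um * up 1 = 0 := by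
    field_simp; ring
  rw [this, zero_smul]

lemma pUm_tens_um (hd : dd up um ≠ 0) {L : ℕ} (x : W L) : pUm up um (tens um x) = x := by
  rw [pUm, pr_tens]
  have : -(up 1) / dd up um * um 0 + up 0 / dd up um * um 1 = 1 := by
    rw [dd] at hd ⊢; field_simp; ring
  rw [this, one_smul]

lemma decomp (hd : dd up um ≠ 0) {L : ℕ} (w : W (L+1)) :
    w = tens up (pUp up um w) + tens um (pUm up um w) := by
  funext s
  have key : Fin.cons (s 0) (fun i => s i.succ) = s := Fin.cons_self_tail s
  have h2 : s 0 = 0 ∨ s 0 = 1 := by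
    have : ∀ c : Fin 2, c = 0 ∨ c = 1 := by decide
    exact this (s 0)
  rw [dd] at hd
  simp only [Pi.add_apply, tens_apply, pUp, pUm, pr, LinearMap.coe_mk, AddHom.coe_mk, dd]
  rcases h2 with h | h <;> rw [h] at key <;> rw [h] <;> conv_lhs => rw [← key]
  · field_simp; ring
  · field_simp
    have hD : -(up 1 * um 0) + um 1 * up 0 ≠ 0 := by intro h; apply hd; linear_combination h
    linear_combination (-(w (Fin.cons 1 fun i => s i.succ))) * mul_inv_cancel₀ hD

lemma uPow_succ (L : ℕ) : uPow up (L+1) = tens up (uPow up L) := by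
  funext s
  rw [uPow, tens_apply, uPow]
  exact Fin.prod_univ_succ _

lemma uPow_ne_zero (hbasis : LinearIndependent ℂ ![up, um]) (L : ℕ) : uPow up L ≠ 0 := by
  have hne : up ≠ 0 := by
    have := hbasis.ne_zero 0
    simpa using this
  obtain ⟨t, ht⟩ := Function.ne_iff.1 hne
  intro h
  have := congrFun h (fun _ => t)
  simp only [uPow, Pi.zero_apply] at this
  rw [Finset.prod_const] at this
  exact pow_ne_zero _ (by simpa using ht) this

section hyps
variable (hup : ∀ a b : Fin 2, ∑ t : Fin 2, qm a b t * up t = 0)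
variable (hum : ∀ a b : Fin 2, ∑ t : Fin 2, qm a b t * um t = um a * um b)
variable (hd : dd up um ≠ 0)
include hup hum hd

lemma Qop_decomp (L : ℕ) (w : W (L+1)) :
    Qop qm (L+1) w = -(tens up (Qop qm L (pUp up um w)))
      - tens um (Dop qm um L (pUm up um w)) := by
  conv_lhs => rw [decomp up um hd w]
  rw [map_add, Qop_tens_up qm up hup, Qop_tens_um qm um hum]
  abel

lemma homotopy (L : ℕ) (w : W (L+1)) :
    pUm up um (Dop qm um (L+1) w) + Dop qm um L (pUm up um w) = w := by
  have e2 : Dop qm um (L+1) w = -(tens up (Qop qm L (pUp up um w)))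
      - tens um (Dop qm um L (pUm up um w)) + tens um w := by
    rw [Dop, LinearMap.add_apply, Qop_decomp qm up um hup hum hd]
  rw [e2, map_add, map_sub, map_neg, pUm_tens_up up um hd, pUm_tens_um up um hd,
    pUm_tens_um up um hd]
  abel

lemma DD (L : ℕ) (ih : ∀ y : W L, Qop qm (L+1) (Qop qm L y) = 0) (y : W L) :
    Dop qm um (L+1) (Dop qm um L y) = 0 := by
  have expand : Dop qm um (L+1) (Dop qm um L y)
      = Qop qm (L+1) (Qop qm L y) + Qop qm (L+1) (tens um y)
        + (tens um (Qop qm L y) + tens um (tens um y)) := by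
    simp only [Dop, LinearMap.add_apply, map_add]
    abel
  rw [expand, ih y, Qop_tens_um qm um hum]
  simp only [Dop, LinearMap.add_apply, map_add]
  abel

lemma QQ : ∀ (L : ℕ) (x : W L), Qop qm (L+1) (Qop qm L x) = 0 := by
  intro L
  induction L with
  | zero => intro x; rw [Qop_zero' qm]; simp
  | succ L ih =>
    intro x
    rw [Qop_decomp qm up um hup hum hd L x, map_sub, map_neg,
      Qop_tens_up qm up hup, Qop_tens_um qm um hum, ih,
      DD qm up um hup hum hd L ih]
    simp

lemma ker_D (L : ℕ) (w : W (L+1)) (hw : Dop qm um (L+1) w = 0) :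
    ∃ y, Dop qm um L y = w := by
  refine ⟨pUm up um w, ?_⟩
  have h := homotopy qm up um hup hum hd L w
  rw [hw, map_zero, zero_add] at h
  exact h

lemma Qop_uPow : ∀ L : ℕ, Qop qm L (uPow up L) = 0 := by
  intro L
  induction L with
  | zero => rw [Qop_zero' qm]; simp
  | succ L ih =>
    rw [uPow_succ, Qop_tens_up qm up hup, ih, map_zero, neg_zero]

lemma ker_parts (L : ℕ) (x : W (L+1)) (hx : Qop qm (L+1) x = 0) :
    Qop qm L (pUp up um x) = 0 ∧ Dop qm um L (pUm up um x) = 0 := by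
  rw [Qop_decomp qm up um hup hum hd L x] at hx
  constructor
  · have h := congrArg (pUp up um) hx
    rw [map_sub, map_neg, pUp_tens_up up um hd, pUp_tens_um up um hd, map_zero,
      sub_zero, neg_eq_zero] at h
    exact h
  · have h := congrArg (pUm up um) hx
    rw [map_sub, map_neg, pUm_tens_up up um hd, pUm_tens_um up um hd, map_zero,
      neg_zero, zero_sub, neg_eq_zero] at h
    exact h

lemma main (hbasis : LinearIndependent ℂ ![up, um]) (L : ℕ) :
    LinearMap.ker (Qop qm (L+1)) =
        LinearMap.range (Qop qm L) ⊔ Submodule.span ℂ {uPow up (L+1)} ∧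
      uPow up (L+1) ∉ LinearMap.range (Qop qm L) := by
  induction L with
  | zero =>
    have hr : LinearMap.range (Qop qm 0) = ⊥ := by
      rw [Qop_zero' qm]; exact LinearMap.range_zero
    constructor
    · rw [hr, bot_sup_eq]
      apply le_antisymm
      · intro x hx
        rw [LinearMap.mem_ker] at hx
        obtain ⟨-, hb⟩ := ker_parts qm up um hup hum hd 0 x hx
        have hb2 : tens um (pUm up um x) = 0 := by
          have : Dop qm um 0 (pUm up um x)
              = Qop qm 0 (pUm up um x) + tens um (pUm up um x) := rfl
          rw [this, Qop_zero' qm] at hb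
          simpa using hb
        have hb3 : pUm up um (x) = 0 := by
          have := congrArg (pUm up um) hb2
          rwa [pUm_tens_um up um hd, map_zero] at this
        have hx2 : x = tens up (pUp up um x) := by
          conv_lhs => rw [decomp up um hd x]
          rw [hb3, map_zero, add_zero]
        set a := pUp up um x with ha
        have ha0 : a = (a Fin.elim0) • uPow up 0 := by
          funext σ
          have hσ : σ = Fin.elim0 := Subsingleton.elim _ _
          rw [hσ]
          simp [uPow]
        rw [Submodule.mem_span_singleton]
        refine ⟨a Fin.elim0, ?_⟩
        rw [hx2, uPow_succ, ← LinearMap.map_smul]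
        exact congrArg (fun y => tens up y) ha0.symm
      · rw [Submodule.span_le, Set.singleton_subset_iff]
        exact LinearMap.mem_ker.2 (Qop_uPow qm up um hup hum hd 1)
    · rw [hr]
      simp only [Submodule.mem_bot]
      exact uPow_ne_zero up um hbasis 1
  | succ L ih =>
    obtain ⟨ihk, ihn⟩ := ih
    constructor
    · apply le_antisymm
      · intro x hx
        rw [LinearMap.mem_ker] at hx
        obtain ⟨haQ, hbD⟩ := ker_parts qm up um hup hum hd (L+1) x hx
        have haker : pUp up um x ∈ LinearMap.range (Qop qm L) ⊔
            Submodule.span ℂ {uPow up (L+1)} := by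
          rw [← ihk]; exact LinearMap.mem_ker.2 haQ
        rw [Submodule.mem_sup] at haker
        obtain ⟨y, hy, z, hz, hyz⟩ := haker
        obtain ⟨a', rfl⟩ := hy
        obtain ⟨c, rfl⟩ := Submodule.mem_span_singleton.1 hz
        obtain ⟨b', hb'⟩ := ker_D qm up um hup hum hd L (pUm up um x) hbD
        rw [Submodule.mem_sup]
        refine ⟨Qop qm (L+1) (-(tens up a') - tens um b'), ⟨_, rfl⟩,
          c • uPow up (L+2),
          Submodule.smul_mem _ c (Submodule.mem_span_singleton_self _), ?_⟩
        rw [map_sub, map_neg, Qop_tens_up qm up hup, Qop_tens_um qm um hum,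
          neg_neg, sub_neg_eq_add]
        have hx2 := decomp up um hd x
        rw [hx2, ← hyz, map_add, LinearMap.map_smul, ← uPow_succ, ← hb']
        module
      · refine sup_le ?_ ?_
        · rintro _ ⟨y, rfl⟩
          exact LinearMap.mem_ker.2 (QQ qm up um hup hum hd (L+1) y)
        · rw [Submodule.span_le, Set.singleton_subset_iff]
          exact LinearMap.mem_ker.2 (Qop_uPow qm up um hup hum hd (L+2))
    · rintro ⟨w, hw⟩
      have h := congrArg (pUp up um) (hw.trans (uPow_succ up (L+1)))
      rw [Qop_decomp qm up um hup hum hd L w, map_sub, map_neg,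
        pUp_tens_up up um hd, pUp_tens_um up um hd, sub_zero,
        pUp_tens_up up um hd] at h
      exact ihn ⟨-(pUp up um w), by rw [map_neg]; exact h⟩

end hyps


end Stmt2Aux

/-- if `q u₊ = 0` and `q u₋ = u₋ ⊗ u₋` for a basis `u₊, u₋` of `ℂ²`,
then the cohomology `H^L = ker Q / im Q` (with `im = 0` for `L = 1`) is one-dimensional,
spanned by the class of `u₊^⊗L`, for every `L ≥ 1`. -/
theorem stmt2 (qm : Fin 2 → Fin 2 → Fin 2 → ℂ) (up um : Fin 2 → ℂ)
    (hbasis : LinearIndependent ℂ ![up, um])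
    (hup : ∀ a b : Fin 2, ∑ t : Fin 2, qm a b t * up t = 0)
    (hum : ∀ a b : Fin 2, ∑ t : Fin 2, qm a b t * um t = um a * um b) :
    (LinearMap.ker (Qop qm 1) = Submodule.span ℂ {uPow up 1} ∧ uPow up 1 ≠ 0) ∧
      ∀ L : ℕ, 1 ≤ L →
        (LinearMap.ker (Qop qm (L + 1)) =
            LinearMap.range (Qop qm L) ⊔ Submodule.span ℂ {uPow up (L + 1)} ∧
          uPow up (L + 1) ∉ LinearMap.range (Qop qm L)) := by
  have hd := Stmt2Aux.dd_ne_zero up um hbasis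
  constructor
  · constructor
    · have hr : LinearMap.range (Qop qm 0) = ⊥ := by
        rw [Stmt2Aux.Qop_zero' qm]; exact LinearMap.range_zero
      have h := (Stmt2Aux.main qm up um hup hum hd hbasis 0).1
      rw [hr, bot_sup_eq] at h
      exact h
    · exact Stmt2Aux.uPow_ne_zero up um hbasis 1
  · exact fun L _ => Stmt2Aux.main qm up um hup hum hd hbasis L
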